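/- Let a > 0 and ε > 0, and let f, g be complex affine functions on ℂ². If there exist positive constants a and r' < 1 such that every z with r' ≤ ∥z∥ ≤ 1 and |f(z)g(z)| ≤ aε satisfies |f(z)| ≤ ε or |g(z)| ≤ ε, then for every r ∈ [r', 1], the set {z : |f(z)g(z)| ≤ aε, ∥z∥ ≤ r} is contained in the polynomial hull of ({|f| ≤ ε} ∪ {|g| ≤ ε}) ∩ r∂𝔹². -/

import Mathlib

open MvPolynomial Set Bornology

set_option maxHeartbeats 1600000

section Aux

lemma diffOn_eval {n : ℕ} (p : MvPolynomial (Fin n) ℂ) (v : Fin n → ℂ → ℂ)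
    (U : Set ℂ) (hv : ∀ i, DifferentiableOn ℂ (v i) U) :
    DifferentiableOn ℂ (fun t => MvPolynomial.eval (fun i => v i t) p) U := by
  induction p using MvPolynomial.induction_on with
  | C a => simpa using differentiableOn_const a
  | add q r hq hr => simp only [map_add]; exact hq.add hr
  | mul_X q i hq => simp only [map_mul, MvPolynomial.eval_X]; exact hq.mul (hv i)

lemma coord_le_norm {n : ℕ} (x : EuclideanSpace ℂ (Fin n)) (i : Fin n) : ‖x i‖ ≤ ‖x‖ := by
  rw [EuclideanSpace.norm_eq]
  have h1 : ‖x i‖ ^ 2 ≤ ∑ j, ‖x j‖ ^ 2 :=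
    Finset.single_le_sum (fun j _ => sq_nonneg ‖x j‖) (Finset.mem_univ i)
  calc ‖x i‖ = Real.sqrt (‖x i‖ ^ 2) := by rw [Real.sqrt_sq (norm_nonneg _)]
    _ ≤ _ := Real.sqrt_le_sqrt h1

lemma norm_affine_le (c₀ c₁ c₂ : ℂ) (w : EuclideanSpace ℂ (Fin 2)) :
    ‖c₀ + c₁ * w 0 + c₂ * w 1‖ ≤ ‖c₀‖ + (‖c₁‖ + ‖c₂‖) * ‖w‖ := by
  have h0 := coord_le_norm w 0
  have h1 := coord_le_norm w 1
  have hw : (0:ℝ) ≤ ‖w‖ := norm_nonneg _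
  calc ‖c₀ + c₁ * w 0 + c₂ * w 1‖ ≤ ‖c₀ + c₁ * w 0‖ + ‖c₂ * w 1‖ := norm_add_le _ _
    _ ≤ (‖c₀‖ + ‖c₁ * w 0‖) + ‖c₂ * w 1‖ := by gcongr; exact norm_add_le _ _
    _ = ‖c₀‖ + ‖c₁‖ * ‖w 0‖ + ‖c₂‖ * ‖w 1‖ := by rw [norm_mul, norm_mul]
    _ ≤ ‖c₀‖ + (‖c₁‖ + ‖c₂‖) * ‖w‖ := by nlinarith [norm_nonneg c₁, norm_nonneg c₂]

/-- Maximum-principle workhorse: if a holomorphic curve `ψ` (with coordinates `v i`) on an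
open set `Ω ⊆ ℂ` passes through a point inside the ball of radius `r` and the sublevel set
`{t ∈ Ω | ‖ψ t‖ < r}` is trapped in a compact subset `A ⊆ Ω`, then the value of any polynomial
at that point is bounded by its sup over the points where the curve meets `K`. -/
lemma key {n : ℕ} (r : ℝ) (K : Set (EuclideanSpace ℂ (Fin n))) (p : MvPolynomial (Fin n) ℂ)
    (hbdd : BddAbove ((fun w : EuclideanSpace ℂ (Fin n) =>
      ‖MvPolynomial.eval (fun i => w i) p‖) '' K))
    (Ω : Set ℂ) (hΩ : IsOpen Ω)
    (v : Fin n → ℂ → ℂ) (hv : ∀ i, DifferentiableOn ℂ (v i) Ω)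
    (ψ : ℂ → EuclideanSpace ℂ (Fin n)) (hψ : ∀ t i, ψ t i = v i t)
    (A : Set ℂ) (hA : IsClosed A) (hAb : IsBounded A) (hAΩ : A ⊆ Ω)
    (hDA : ∀ t ∈ Ω, ‖ψ t‖ < r → t ∈ A)
    (hfr : ∀ t ∈ Ω, ‖ψ t‖ = r → ψ t ∈ K)
    (t₀ : ℂ) (ht₀ : t₀ ∈ Ω) (ht₀r : ‖ψ t₀‖ < r) :
    ‖MvPolynomial.eval (fun i => ψ t₀ i) p‖ ≤
      sSup ((fun w : EuclideanSpace ℂ (Fin n) =>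
        ‖MvPolynomial.eval (fun i => w i) p‖) '' K) := by
  set D : Set ℂ := Ω ∩ (fun t => ‖ψ t‖) ⁻¹' (Set.Iio r) with hD
  have hnc : ContinuousOn (fun t => ‖ψ t‖) Ω := by
    have heq : (fun t => ‖ψ t‖) = fun t => Real.sqrt (∑ i, ‖v i t‖ ^ 2) := by
      funext t
      rw [EuclideanSpace.norm_eq]
      congr 1
      exact Finset.sum_congr rfl fun i _ => by rw [hψ]
    rw [heq]
    exact Real.continuous_sqrt.comp_continuousOn <|
      continuousOn_finset_sum _ fun i _ => ((hv i).continuousOn.norm.pow 2)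
  have hDopen : IsOpen D := hnc.isOpen_inter_preimage hΩ isOpen_Iio
  have hDA' : D ⊆ A := fun t ht => hDA t ht.1 ht.2
  have hclos : closure D ⊆ A := closure_minimal hDA' hA
  have hfun : (fun i => ψ t₀ i) = fun i => v i t₀ := funext fun i => hψ t₀ i
  rw [hfun]
  refine Complex.norm_le_of_forall_mem_frontier_norm_le (hAb.subset hDA')
    ((diffOn_eval p v (closure D) fun i => (hv i).mono (hclos.trans hAΩ)).diffContOnCl)
    (fun t ht => ?_) (subset_closure ⟨ht₀, ht₀r⟩)
  have htc : t ∈ closure D := frontier_subset_closure ht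
  have htΩ : t ∈ Ω := hAΩ (hclos htc)
  have htD : t ∉ D := by
    rw [hDopen.frontier_eq] at ht
    exact ht.2
  have hle : ‖ψ t‖ ≤ r := by
    have hct : ContinuousWithinAt (fun t => ‖ψ t‖) D t :=
      (hnc.continuousAt (hΩ.mem_nhds htΩ)).continuousWithinAt
    have hmem := hct.mem_closure_image htc
    have himg : (fun t => ‖ψ t‖) '' D ⊆ Set.Iic r := by
      rintro x ⟨s, hs, rfl⟩
      have hs2 : ‖ψ s‖ < r := hs.2
      exact le_of_lt hs2
    exact closure_minimal himg isClosed_Iic hmem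
  have heqr : ‖ψ t‖ = r := le_antisymm hle (not_lt.1 fun h => htD ⟨htΩ, h⟩)
  have hK := hfr t htΩ heqr
  have hfun2 : (fun i => v i t) = fun i => ψ t i := funext fun i => (hψ t i).symm
  rw [hfun2]
  exact le_csSup hbdd ⟨ψ t, hK, rfl⟩

/-- The case of a complex affine line through `z₀` on which `f·g` is constant. -/
lemma line_case (f₀ f₁ f₂ g₀ g₁ g₂ : ℂ) {r aε : ℝ}
    (K : Set (EuclideanSpace ℂ (Fin 2))) (p : MvPolynomial (Fin 2) ℂ)
    (hbdd : BddAbove ((fun w : EuclideanSpace ℂ (Fin 2) =>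
      ‖MvPolynomial.eval (fun i => w i) p‖) '' K))
    (hmemK : ∀ w : EuclideanSpace ℂ (Fin 2), ‖w‖ = r →
      ‖(f₀ + f₁ * w 0 + f₂ * w 1) * (g₀ + g₁ * w 0 + g₂ * w 1)‖ ≤ aε → w ∈ K)
    (z₀ : EuclideanSpace ℂ (Fin 2))
    (hz₀h : ‖(f₀ + f₁ * z₀ 0 + f₂ * z₀ 1) * (g₀ + g₁ * z₀ 0 + g₂ * z₀ 1)‖ ≤ aε)
    (hz₀r : ‖z₀‖ < r)
    (v : Fin 2 → ℂ) (j : Fin 2) (hvj : v j ≠ 0)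
    (hconst : ∀ t : ℂ,
      (f₀ + f₁ * (z₀ 0 + t * v 0) + f₂ * (z₀ 1 + t * v 1)) *
        (g₀ + g₁ * (z₀ 0 + t * v 0) + g₂ * (z₀ 1 + t * v 1)) =
      (f₀ + f₁ * z₀ 0 + f₂ * z₀ 1) * (g₀ + g₁ * z₀ 0 + g₂ * z₀ 1)) :
    ‖MvPolynomial.eval (fun i => z₀ i) p‖ ≤
      sSup ((fun w : EuclideanSpace ℂ (Fin 2) =>
        ‖MvPolynomial.eval (fun i => w i) p‖) '' K) := by
  set ψ : ℂ → EuclideanSpace ℂ (Fin 2) :=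
    fun t => (WithLp.equiv 2 (Fin 2 → ℂ)).symm (fun i => z₀ i + t * v i) with hψdef
  have hψ : ∀ t i, ψ t i = z₀ i + t * v i := fun t i => rfl
  have hψ0 : ψ 0 = z₀ := by
    ext i
    simp [hψ]
  have hkey := key r K p hbdd Set.univ isOpen_univ (fun i t => z₀ i + t * v i)
    (fun i => (differentiableOn_const _).add (differentiableOn_id.mul_const _))
    ψ hψ (Metric.closedBall (0:ℂ) ((r + ‖z₀ j‖) / ‖v j‖))
    Metric.isClosed_closedBall Metric.isBounded_closedBall (Set.subset_univ _)
    ?_ ?_ 0 (Set.mem_univ _) (by rw [hψ0]; exact hz₀r)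
  · rwa [hψ0] at hkey
  · intro t _ hlt
    have h1 : ‖ψ t j‖ ≤ ‖ψ t‖ := coord_le_norm _ j
    rw [hψ t j] at h1
    have h2 : ‖t * v j‖ ≤ ‖z₀ j + t * v j‖ + ‖z₀ j‖ := by
      calc ‖t * v j‖ = ‖(z₀ j + t * v j) - z₀ j‖ := by ring_nf
        _ ≤ ‖z₀ j + t * v j‖ + ‖z₀ j‖ := norm_sub_le _ _
    rw [norm_mul] at h2
    have hvpos : (0:ℝ) < ‖v j‖ := norm_pos_iff.2 hvj
    have h3 : ‖t‖ * ‖v j‖ ≤ r + ‖z₀ j‖ := by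
      have := h1.trans hlt.le
      linarith
    rw [Metric.mem_closedBall, dist_zero_right, le_div_iff₀ hvpos]
    exact h3
  · intro t _ hnorm
    refine hmemK (ψ t) hnorm ?_
    rw [hψ t 0, hψ t 1, hconst t]
    exact hz₀h

/-- The case of a non-degenerate hyperbola `{f·g = c₀}` through `z₀`, parametrized by `ℂ*`. -/
lemma annulus_case (f₀ f₁ f₂ g₀ g₁ g₂ : ℂ) {r aε : ℝ} (hr : 0 < r)
    (K : Set (EuclideanSpace ℂ (Fin 2))) (p : MvPolynomial (Fin 2) ℂ)
    (hbdd : BddAbove ((fun w : EuclideanSpace ℂ (Fin 2) =>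
      ‖MvPolynomial.eval (fun i => w i) p‖) '' K))
    (hmemK : ∀ w : EuclideanSpace ℂ (Fin 2), ‖w‖ = r →
      ‖(f₀ + f₁ * w 0 + f₂ * w 1) * (g₀ + g₁ * w 0 + g₂ * w 1)‖ ≤ aε → w ∈ K)
    (z₀ : EuclideanSpace ℂ (Fin 2))
    (hz₀h : ‖(f₀ + f₁ * z₀ 0 + f₂ * z₀ 1) * (g₀ + g₁ * z₀ 0 + g₂ * z₀ 1)‖ ≤ aε)
    (hz₀r : ‖z₀‖ < r)
    (hF₀ : f₀ + f₁ * z₀ 0 + f₂ * z₀ 1 ≠ 0)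
    (hG₀ : g₀ + g₁ * z₀ 0 + g₂ * z₀ 1 ≠ 0)
    (hd : f₁ * g₂ - f₂ * g₁ ≠ 0) :
    ‖MvPolynomial.eval (fun i => z₀ i) p‖ ≤
      sSup ((fun w : EuclideanSpace ℂ (Fin 2) =>
        ‖MvPolynomial.eval (fun i => w i) p‖) '' K) := by
  set F₀ : ℂ := f₀ + f₁ * z₀ 0 + f₂ * z₀ 1 with hF₀def
  set G₀ : ℂ := g₀ + g₁ * z₀ 0 + g₂ * z₀ 1 with hG₀def
  set d : ℂ := f₁ * g₂ - f₂ * g₁ with hddef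
  set v : Fin 2 → ℂ → ℂ := ![
    fun s => z₀ 0 + (g₂ * (F₀ * (s - 1)) - f₂ * (G₀ * (s⁻¹ - 1))) / d,
    fun s => z₀ 1 + (-(g₁ * (F₀ * (s - 1))) + f₁ * (G₀ * (s⁻¹ - 1))) / d] with hvdef
  set ψ : ℂ → EuclideanSpace ℂ (Fin 2) :=
    fun t => (WithLp.equiv 2 (Fin 2 → ℂ)).symm (fun i => v i t) with hψdef
  have hψ : ∀ t i, ψ t i = v i t := fun t i => rfl
  set Ω : Set ℂ := {(0:ℂ)}ᶜ with hΩdef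
  have hΩopen : IsOpen Ω := isOpen_compl_singleton
  have hFs : ∀ s : ℂ, s ≠ 0 → f₀ + f₁ * v 0 s + f₂ * v 1 s = F₀ * s := by
    intro s hs
    simp only [hvdef, Matrix.cons_val_zero, Matrix.cons_val_one, Matrix.head_cons]
    rw [hF₀def]
    field_simp
    ring
  have hGs : ∀ s : ℂ, s ≠ 0 → g₀ + g₁ * v 0 s + g₂ * v 1 s = G₀ * s⁻¹ := by
    intro s hs
    simp only [hvdef, Matrix.cons_val_zero, Matrix.cons_val_one, Matrix.head_cons]
    rw [hG₀def]
    field_simp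
    ring
  have hψ1 : ψ 1 = z₀ := by
    ext i
    rw [hψ]
    fin_cases i <;> · simp [hvdef]
  have hinv : DifferentiableOn ℂ (fun s : ℂ => s⁻¹) Ω := by
    apply DifferentiableOn.inv differentiableOn_id
    intro x hx
    exact hx
  have hv : ∀ i, DifferentiableOn ℂ (v i) Ω := by
    intro i
    fin_cases i <;>
      simp only [hvdef, Matrix.cons_val_zero, Matrix.cons_val_one, Matrix.head_cons] <;>
      · apply (differentiableOn_const _).add
        apply DifferentiableOn.div_const
        first
        | exact DifferentiableOn.sub
            ((differentiableOn_const _).mul ((differentiableOn_const _).mul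
              (differentiableOn_id.sub (differentiableOn_const _))))
            ((differentiableOn_const _).mul ((differentiableOn_const _).mul
              (hinv.sub (differentiableOn_const _))))
        | exact DifferentiableOn.add
            (DifferentiableOn.neg ((differentiableOn_const _).mul ((differentiableOn_const _).mul
              (differentiableOn_id.sub (differentiableOn_const _)))))
            ((differentiableOn_const _).mul ((differentiableOn_const _).mul
              (hinv.sub (differentiableOn_const _))))
  set Cf : ℝ := ‖f₀‖ + (‖f₁‖ + ‖f₂‖) * r with hCf
  set Cg : ℝ := ‖g₀‖ + (‖g₁‖ + ‖g₂‖) * r with hCg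
  set R : ℝ := Cf / ‖F₀‖ with hR
  set δ : ℝ := ‖G₀‖ / (Cg + 1) with hδ
  have hF₀pos : (0:ℝ) < ‖F₀‖ := norm_pos_iff.2 hF₀
  have hG₀pos : (0:ℝ) < ‖G₀‖ := norm_pos_iff.2 hG₀
  have hCgpos : (0:ℝ) < Cg + 1 := by
    have h1 : (0:ℝ) ≤ ‖g₀‖ := norm_nonneg _
    have h2 : (0:ℝ) ≤ (‖g₁‖ + ‖g₂‖) * r :=
      mul_nonneg (by positivity) hr.le
    have : (0:ℝ) ≤ Cg := by rw [hCg]; linarith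
    linarith
  have hδpos : (0:ℝ) < δ := div_pos hG₀pos hCgpos
  set A : Set ℂ := {s : ℂ | δ ≤ ‖s‖ ∧ ‖s‖ ≤ R} with hA
  have hAclosed : IsClosed A := by
    apply IsClosed.inter
    · exact isClosed_le continuous_const continuous_norm
    · exact isClosed_le continuous_norm continuous_const
  have hAbdd : IsBounded A := by
    apply (Metric.isBounded_closedBall (x := (0:ℂ)) (r := R)).subset
    intro s hs
    rw [Metric.mem_closedBall, dist_zero_right]
    exact hs.2
  have hAΩ : A ⊆ Ω := by
    intro s hs
    have : (0:ℝ) < ‖s‖ := lt_of_lt_of_le hδpos hs.1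
    simpa [hΩdef] using norm_pos_iff.1 this
  have hkey := key r K p hbdd Ω hΩopen v hv ψ hψ A hAclosed hAbdd hAΩ ?_ ?_
    1 (by simp [hΩdef]) (by rw [hψ1]; exact hz₀r)
  · rwa [hψ1] at hkey
  · intro s hsΩ hlt
    have hs0 : s ≠ 0 := hsΩ
    have hFb : ‖f₀ + f₁ * ψ s 0 + f₂ * ψ s 1‖ ≤ Cf := by
      refine (norm_affine_le f₀ f₁ f₂ (ψ s)).trans ?_
      rw [hCf]
      nlinarith [norm_nonneg f₁, norm_nonneg f₂, norm_nonneg (ψ s), hlt.le]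
    have hGb : ‖g₀ + g₁ * ψ s 0 + g₂ * ψ s 1‖ ≤ Cg := by
      refine (norm_affine_le g₀ g₁ g₂ (ψ s)).trans ?_
      rw [hCg]
      nlinarith [norm_nonneg g₁, norm_nonneg g₂, norm_nonneg (ψ s), hlt.le]
    rw [hψ s 0, hψ s 1, hFs s hs0] at hFb
    rw [hψ s 0, hψ s 1, hGs s hs0] at hGb
    rw [norm_mul] at hFb hGb
    constructor
    · have hsinv : ‖s⁻¹‖ = ‖s‖⁻¹ := norm_inv s
      rw [hsinv, ← div_eq_mul_inv] at hGb
      have hspos : (0:ℝ) < ‖s‖ := norm_pos_iff.2 hs0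
      have h2 : ‖G₀‖ ≤ Cg * ‖s‖ := (div_le_iff₀ hspos).1 hGb
      rw [hδ, div_le_iff₀ hCgpos]
      nlinarith
    · rw [hR, le_div_iff₀ hF₀pos]
      linarith [hFb]
  · intro s hsΩ hnorm
    have hs0 : s ≠ 0 := hsΩ
    refine hmemK (ψ s) hnorm ?_
    rw [hψ s 0, hψ s 1, hFs s hs0, hGs s hs0]
    have heq : F₀ * s * (G₀ * s⁻¹) = F₀ * G₀ := by
      rw [mul_mul_mul_comm, mul_inv_cancel₀ hs0, mul_one]
    rw [heq]
    exact hz₀h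

/-- Any point strictly inside the ball where `|f·g| ≤ aε` satisfies the polynomial hull bound. -/
lemma interior_case (f₀ f₁ f₂ g₀ g₁ g₂ : ℂ) {r aε : ℝ} (hr : 0 < r)
    (K : Set (EuclideanSpace ℂ (Fin 2))) (p : MvPolynomial (Fin 2) ℂ)
    (hbdd : BddAbove ((fun w : EuclideanSpace ℂ (Fin 2) =>
      ‖MvPolynomial.eval (fun i => w i) p‖) '' K))
    (hmemK : ∀ w : EuclideanSpace ℂ (Fin 2), ‖w‖ = r →
      ‖(f₀ + f₁ * w 0 + f₂ * w 1) * (g₀ + g₁ * w 0 + g₂ * w 1)‖ ≤ aε → w ∈ K)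
    (z₀ : EuclideanSpace ℂ (Fin 2))
    (hz₀h : ‖(f₀ + f₁ * z₀ 0 + f₂ * z₀ 1) * (g₀ + g₁ * z₀ 0 + g₂ * z₀ 1)‖ ≤ aε)
    (hz₀r : ‖z₀‖ < r) :
    ‖MvPolynomial.eval (fun i => z₀ i) p‖ ≤
      sSup ((fun w : EuclideanSpace ℂ (Fin 2) =>
        ‖MvPolynomial.eval (fun i => w i) p‖) '' K) := by
  by_cases hc : (f₀ + f₁ * z₀ 0 + f₂ * z₀ 1) * (g₀ + g₁ * z₀ 0 + g₂ * z₀ 1) = 0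
  · rcases mul_eq_zero.1 hc with hF0 | hG0
    · -- f vanishes at z₀
      by_cases hf12 : f₁ = 0 ∧ f₂ = 0
      · refine line_case f₀ f₁ f₂ g₀ g₁ g₂ K p hbdd hmemK z₀ hz₀h hz₀r ![1, 0] 0
          (by simp) fun t => ?_
        simp only [Matrix.cons_val_zero, Matrix.cons_val_one, Matrix.head_cons]
        have hFt : f₀ + f₁ * (z₀ 0 + t * 1) + f₂ * (z₀ 1 + t * 0) = 0 := by
          linear_combination hF0 + (t : ℂ) * hf12.1
        rw [hFt, hF0, zero_mul, zero_mul]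
      · refine line_case f₀ f₁ f₂ g₀ g₁ g₂ K p hbdd hmemK z₀ hz₀h hz₀r ![-f₂, f₁]
          (if f₁ = 0 then 0 else 1) ?_ fun t => ?_
        · rcases not_and_or.1 hf12 with h | h
          · simp only [h, if_neg h]
            simpa using h
          · have : ¬ f₁ = 0 ∨ f₁ = 0 := (em _).symm
            by_cases h1 : f₁ = 0
            · simp only [if_pos h1]
              simpa using h
            · simp only [if_neg h1]
              simpa using h1
        · simp only [Matrix.cons_val_zero, Matrix.cons_val_one, Matrix.head_cons]
          have hFt : f₀ + f₁ * (z₀ 0 + t * -f₂) + f₂ * (z₀ 1 + t * f₁) = 0 := by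
            linear_combination hF0
          rw [hFt, hF0, zero_mul, zero_mul]
    · -- g vanishes at z₀
      by_cases hg12 : g₁ = 0 ∧ g₂ = 0
      · refine line_case f₀ f₁ f₂ g₀ g₁ g₂ K p hbdd hmemK z₀ hz₀h hz₀r ![1, 0] 0
          (by simp) fun t => ?_
        simp only [Matrix.cons_val_zero, Matrix.cons_val_one, Matrix.head_cons]
        have hGt : g₀ + g₁ * (z₀ 0 + t * 1) + g₂ * (z₀ 1 + t * 0) = 0 := by
          linear_combination hG0 + (t : ℂ) * hg12.1
        rw [hGt, hG0, mul_zero, mul_zero]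
      · refine line_case f₀ f₁ f₂ g₀ g₁ g₂ K p hbdd hmemK z₀ hz₀h hz₀r ![-g₂, g₁]
          (if g₁ = 0 then 0 else 1) ?_ fun t => ?_
        · rcases not_and_or.1 hg12 with h | h
          · by_cases h1 : g₁ = 0
            · simp only [if_pos h1]
              exact absurd h1 h
            · simp only [if_neg h1]
              simpa using h1
          · by_cases h1 : g₁ = 0
            · simp only [if_pos h1]
              simpa using h
            · simp only [if_neg h1]
              simpa using h1
        · simp only [Matrix.cons_val_zero, Matrix.cons_val_one, Matrix.head_cons]
          have hGt : g₀ + g₁ * (z₀ 0 + t * -g₂) + g₂ * (z₀ 1 + t * g₁) = 0 := by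
            linear_combination hG0
          rw [hGt, hG0, mul_zero, mul_zero]
  · -- f(z₀) ≠ 0 and g(z₀) ≠ 0
    obtain ⟨hF₀, hG₀⟩ := mul_ne_zero_iff.1 hc
    by_cases hd : f₁ * g₂ - f₂ * g₁ = 0
    · -- degenerate (parallel) case: find a line on which f·g is constant
      by_cases hf12 : f₁ = 0 ∧ f₂ = 0
      · by_cases hg12 : g₁ = 0 ∧ g₂ = 0
        · refine line_case f₀ f₁ f₂ g₀ g₁ g₂ K p hbdd hmemK z₀ hz₀h hz₀r ![1, 0] 0
            (by simp) fun t => ?_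
          simp only [Matrix.cons_val_zero, Matrix.cons_val_one, Matrix.head_cons]
          have hFt : f₀ + f₁ * (z₀ 0 + t * 1) + f₂ * (z₀ 1 + t * 0)
              = f₀ + f₁ * z₀ 0 + f₂ * z₀ 1 := by
            linear_combination (t : ℂ) * hf12.1
          have hGt : g₀ + g₁ * (z₀ 0 + t * 1) + g₂ * (z₀ 1 + t * 0)
              = g₀ + g₁ * z₀ 0 + g₂ * z₀ 1 := by
            linear_combination (t : ℂ) * hg12.1
          rw [hFt, hGt]
        · refine line_case f₀ f₁ f₂ g₀ g₁ g₂ K p hbdd hmemK z₀ hz₀h hz₀r ![-g₂, g₁]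
            (if g₁ = 0 then 0 else 1) ?_ fun t => ?_
          · rcases not_and_or.1 hg12 with h | h
            · by_cases h1 : g₁ = 0
              · simp only [if_pos h1]
                exact absurd h1 h
              · simp only [if_neg h1]
                simpa using h1
            · by_cases h1 : g₁ = 0
              · simp only [if_pos h1]
                simpa using h
              · simp only [if_neg h1]
                simpa using h1
          · simp only [Matrix.cons_val_zero, Matrix.cons_val_one, Matrix.head_cons]
            have hFt : f₀ + f₁ * (z₀ 0 + t * -g₂) + f₂ * (z₀ 1 + t * g₁)
                = f₀ + f₁ * z₀ 0 + f₂ * z₀ 1 := by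
              linear_combination (-(t : ℂ) * g₂) * hf12.1 + ((t : ℂ) * g₁) * hf12.2
            have hGt : g₀ + g₁ * (z₀ 0 + t * -g₂) + g₂ * (z₀ 1 + t * g₁)
                = g₀ + g₁ * z₀ 0 + g₂ * z₀ 1 := by
              ring
            rw [hFt, hGt]
      · refine line_case f₀ f₁ f₂ g₀ g₁ g₂ K p hbdd hmemK z₀ hz₀h hz₀r ![-f₂, f₁]
          (if f₁ = 0 then 0 else 1) ?_ fun t => ?_
        · rcases not_and_or.1 hf12 with h | h
          · by_cases h1 : f₁ = 0
            · simp only [if_pos h1]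
              exact absurd h1 h
            · simp only [if_neg h1]
              simpa using h1
          · by_cases h1 : f₁ = 0
            · simp only [if_pos h1]
              simpa using h
            · simp only [if_neg h1]
              simpa using h1
        · simp only [Matrix.cons_val_zero, Matrix.cons_val_one, Matrix.head_cons]
          have hFt : f₀ + f₁ * (z₀ 0 + t * -f₂) + f₂ * (z₀ 1 + t * f₁)
              = f₀ + f₁ * z₀ 0 + f₂ * z₀ 1 := by
            ring
          have hGt : g₀ + g₁ * (z₀ 0 + t * -f₂) + g₂ * (z₀ 1 + t * f₁)
              = g₀ + g₁ * z₀ 0 + g₂ * z₀ 1 := by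
            linear_combination (t : ℂ) * hd
          rw [hFt, hGt]
    · exact annulus_case f₀ f₁ f₂ g₀ g₁ g₂ hr K p hbdd hmemK z₀ hz₀h hz₀r hF₀ hG₀ hd

end Aux

/-- The polynomial hull of a set `K ⊆ ℂⁿ`. -/
noncomputable def polyHull {n : ℕ} (K : Set (EuclideanSpace ℂ (Fin n))) :
    Set (EuclideanSpace ℂ (Fin n)) :=
  {z | ∀ p : MvPolynomial (Fin n) ℂ,
    ‖MvPolynomial.eval (fun i => z i) p‖ ≤
      sSup ((fun w : EuclideanSpace ℂ (Fin n) => ‖MvPolynomial.eval (fun i => w i) p‖) '' K)}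

/-- Corollary 1: the dichotomy of the main lemma implies that
`{|fg| ≤ aε} ∩ {‖z‖ ≤ r}` is contained in the polynomial hull of
`({|f| ≤ ε} ∪ {|g| ≤ ε}) ∩ r∂𝔹²` for every r ∈ [r', 1]. -/
theorem stmt_1 (a ε : ℝ) (ha : 0 < a) (hε : 0 < ε) (f₀ f₁ f₂ g₀ g₁ g₂ : ℂ)
    (r' : ℝ) (hr'0 : 0 < r') (hr'1 : r' < 1)
    (hdich : ∀ z : EuclideanSpace ℂ (Fin 2), r' ≤ ‖z‖ → ‖z‖ ≤ 1 →
      ‖(f₀ + f₁ * z 0 + f₂ * z 1) * (g₀ + g₁ * z 0 + g₂ * z 1)‖ ≤ a * ε →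
      ‖f₀ + f₁ * z 0 + f₂ * z 1‖ ≤ ε ∨ ‖g₀ + g₁ * z 0 + g₂ * z 1‖ ≤ ε) :
    ∀ r : ℝ, r' ≤ r → r ≤ 1 →
      {z : EuclideanSpace ℂ (Fin 2) |
          ‖(f₀ + f₁ * z 0 + f₂ * z 1) * (g₀ + g₁ * z 0 + g₂ * z 1)‖ ≤ a * ε ∧ ‖z‖ ≤ r} ⊆
        polyHull (({z : EuclideanSpace ℂ (Fin 2) | ‖f₀ + f₁ * z 0 + f₂ * z 1‖ ≤ ε} ∪
            {z : EuclideanSpace ℂ (Fin 2) | ‖g₀ + g₁ * z 0 + g₂ * z 1‖ ≤ ε}) ∩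
          Metric.sphere 0 r) := by
  intro r hr'r hr1 z₀ hz₀
  obtain ⟨hz₀h, hz₀r⟩ := hz₀
  have hr0 : (0:ℝ) < r := lt_of_lt_of_le hr'0 hr'r
  set K : Set (EuclideanSpace ℂ (Fin 2)) :=
    ({z : EuclideanSpace ℂ (Fin 2) | ‖f₀ + f₁ * z 0 + f₂ * z 1‖ ≤ ε} ∪
      {z : EuclideanSpace ℂ (Fin 2) | ‖g₀ + g₁ * z 0 + g₂ * z 1‖ ≤ ε}) ∩
      Metric.sphere 0 r with hK
  intro p
  -- continuity facts
  have hcoord : ∀ i : Fin 2, Continuous fun w : EuclideanSpace ℂ (Fin 2) => w i :=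
    fun i => (continuous_apply i).comp (PiLp.continuous_ofLp 2 _)
  have hFcont : Continuous fun w : EuclideanSpace ℂ (Fin 2) => f₀ + f₁ * w 0 + f₂ * w 1 := by
    exact ((continuous_const.add (continuous_const.mul (hcoord 0))).add
      (continuous_const.mul (hcoord 1)))
  have hGcont : Continuous fun w : EuclideanSpace ℂ (Fin 2) => g₀ + g₁ * w 0 + g₂ * w 1 := by
    exact ((continuous_const.add (continuous_const.mul (hcoord 0))).add
      (continuous_const.mul (hcoord 1)))
  have hKclosed : IsClosed
      ({z : EuclideanSpace ℂ (Fin 2) | ‖f₀ + f₁ * z 0 + f₂ * z 1‖ ≤ ε} ∪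
        {z : EuclideanSpace ℂ (Fin 2) | ‖g₀ + g₁ * z 0 + g₂ * z 1‖ ≤ ε}) :=
    IsClosed.union (isClosed_le hFcont.norm continuous_const)
      (isClosed_le hGcont.norm continuous_const)
  have hKcp : IsCompact K := by
    rw [hK]
    exact (isCompact_sphere (0 : EuclideanSpace ℂ (Fin 2)) r).inter_left hKclosed
  have hevalcont : Continuous fun w : EuclideanSpace ℂ (Fin 2) =>
      ‖MvPolynomial.eval (fun i => w i) p‖ :=
    ((MvPolynomial.continuous_eval p).comp (continuous_pi hcoord)).norm
  have hbdd : BddAbove ((fun w : EuclideanSpace ℂ (Fin 2) =>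
      ‖MvPolynomial.eval (fun i => w i) p‖) '' K) :=
    (hKcp.image hevalcont).bddAbove
  have hmemK : ∀ w : EuclideanSpace ℂ (Fin 2), ‖w‖ = r →
      ‖(f₀ + f₁ * w 0 + f₂ * w 1) * (g₀ + g₁ * w 0 + g₂ * w 1)‖ ≤ a * ε → w ∈ K := by
    intro w hw hprod
    have h1 : r' ≤ ‖w‖ := by rw [hw]; exact hr'r
    have h2 : ‖w‖ ≤ 1 := by rw [hw]; exact hr1
    refine ⟨hdich w h1 h2 hprod, ?_⟩
    rw [mem_sphere_zero_iff_norm]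
    exact hw
  rcases eq_or_lt_of_le hz₀r with heq | hlt
  · -- z₀ is on the sphere already
    have hmem : z₀ ∈ K := hmemK z₀ heq hz₀h
    exact le_csSup hbdd ⟨z₀, hmem, rfl⟩
  · exact interior_case f₀ f₁ f₂ g₀ g₁ g₂ hr0 K p hbdd hmemK z₀ hz₀h hlt
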